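/- arXiv:2501.05699 — 2 statements merged into one kernel-verified Lean document; each statement's English description precedes it below -/
import Mathlib

section
/- Let Ω ⊆ ℝⁿ be an open set, h : Ω → GL(r,ℝ) a C² map taking values in symmetric positive definite matrices (a metric on the trivial rank-r bundle), and φ : Ω → ℝ a C² function. Define the curvature-type operator Θ^{(E,h)} acting on E-valued p-forms s = (s¹,...,sʳ) by (Θ^{(E,h)} s)^i = −Σ_{j,k} dh^{ij} ∧ (∇h_{jk} ⌟ s^k) − Σ_{j,k} h^{ij} F_{h_{jk}} s^k, where (h^{ij}) is the inverse matrix of (h_{ij}). Then Θ^{(E, h e^{−φ})} = Θ^{(E,h)} + F_φ, where F_φ u = Σ_{i,j} φ_{ij} dx_i ∧ (∂_j ⌟ u) acts diagonally on the components. -/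
open scoped RealInnerProductSpace

noncomputable section

abbrev Euc (n : ℕ) := EuclideanSpace ℝ (Fin n)

namespace Forms

/-- Concrete model of `p`-covectors on ℝⁿ: arrays of coefficients. -/
abbrev Form (n p : ℕ) := (Fin p → Fin n) → ℝ

/-- A coefficient array is alternating if it changes by the sign of a permutation of the
indices. -/
def IsAlternating {n p : ℕ} (u : Form n p) : Prop :=
  ∀ (σ : Equiv.Perm (Fin p)) (I : Fin p → Fin n), u (I ∘ σ) = (Equiv.Perm.sign σ : ℤ) * u I

/-- The standard inner product on `p`-covectors: `⟨u,v⟩ = (1/p!) Σ_I u_I v_I`. -/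
def formInner {n p : ℕ} (u v : Form n p) : ℝ :=
  (p.factorial : ℝ)⁻¹ * ∑ I : Fin p → Fin n, u I * v I

/-- Exterior multiplication by the basis covector `dxᵢ`. -/
def wedge1 {n p : ℕ} (i : Fin n) (u : Form n p) : Form n (p + 1) :=
  fun I => ∑ k : Fin (p + 1),
    (-1 : ℝ) ^ (k : ℕ) * (if I k = i then 1 else 0) * u (I ∘ k.succAbove)

/-- Exterior multiplication by the covector with coefficients `w`. -/
def wedgeV {n p : ℕ} (w : Fin n → ℝ) (u : Form n p) : Form n (p + 1) :=
  fun I => ∑ k : Fin (p + 1), (-1 : ℝ) ^ (k : ℕ) * w (I k) * u (I ∘ k.succAbove)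

/-- Interior product (contraction) with the basis vector `∂ⱼ`. -/
def interior1 {n p : ℕ} (j : Fin n) (u : Form n (p + 1)) : Form n p :=
  fun I => u (Fin.cons j I)

/-- Interior product with the vector with coefficients `v`. -/
def interiorV {n p : ℕ} (v : Fin n → ℝ) (u : Form n (p + 1)) : Form n p :=
  fun I => ∑ j : Fin n, v j * u (Fin.cons j I)

/-- The Hessian-type operator `F_A u = Σᵢⱼ Aᵢⱼ dxᵢ ∧ (∂ⱼ ⌟ u)`. -/
def Fop {n p : ℕ} (A : Matrix (Fin n) (Fin n) ℝ) (u : Form n (p + 1)) : Form n (p + 1) :=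
  fun I => ∑ i : Fin n, ∑ j : Fin n, A i j * wedge1 i (interior1 j u) I

/-- The Hessian matrix of a scalar function. -/
def hess {n : ℕ} (φ : Euc n → ℝ) (x : Euc n) : Matrix (Fin n) (Fin n) ℝ :=
  Matrix.of fun i j =>
    iteratedFDeriv ℝ 2 φ x ![EuclideanSpace.single i 1, EuclideanSpace.single j 1]

/-- The exterior derivative of a `p`-form-valued field. -/
def extD {n p : ℕ} (f : Euc n → Form n p) (x : Euc n) : Form n (p + 1) :=
  fun I => ∑ k : Fin (p + 1),
    (-1 : ℝ) ^ (k : ℕ) *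
      fderiv ℝ (fun y => f y (I ∘ k.succAbove)) x (EuclideanSpace.single (I k) 1)

end Forms

namespace Forms

/-- The coefficients of the differential `dg` of a scalar function (equivalently, of its
gradient vector field) at `x`. -/
def dcoef {n : ℕ} (g : Euc n → ℝ) (x : Euc n) : Fin n → ℝ :=
  fun l => fderiv ℝ g x (EuclideanSpace.single l 1)

/-- The curvature-type operator `Θ^{(E,h)}` of a metric `h` on the trivial rank-`r` bundle,
acting on an `ℝʳ`-valued `(p+1)`-form `s = (s¹,…,sʳ)`:
`(Θ^{(E,h)} s)ⁱ = −Σ_{j,k} dhⁱʲ ∧ (∇h_{jk} ⌟ sᵏ) − Σ_{j,k} hⁱʲ F_{h_{jk}} sᵏ`. -/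
def Theta {n r p : ℕ} (h : Euc n → Matrix (Fin r) (Fin r) ℝ)
    (s : Fin r → Euc n → Form n (p + 1)) (x : Euc n) : Fin r → Form n (p + 1) :=
  fun i I =>
    -(∑ j : Fin r, ∑ k : Fin r,
        wedgeV (dcoef (fun y => (h y)⁻¹ i j) x)
          (interiorV (dcoef (fun y => h y j k) x) (s k x)) I)
    - ∑ j : Fin r, ∑ k : Fin r,
        (h x)⁻¹ i j * Fop (hess (fun y => h y j k) x) (s k x) I

end Forms

namespace ThetaAux

open Forms Filter

variable {n : ℕ}

/-! ### Combinatorial normal forms -/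

lemma sum_comm3 {α β γ : Type*} [Fintype α] [Fintype β] [Fintype γ]
    (g : α → β → γ → ℝ) :
    ∑ a : α, ∑ b : β, ∑ c : γ, g a b c = ∑ c : γ, ∑ b : β, ∑ a : α, g a b c :=
  calc ∑ a : α, ∑ b : β, ∑ c : γ, g a b c
      = ∑ b : β, ∑ a : α, ∑ c : γ, g a b c := Finset.sum_comm
    _ = ∑ b : β, ∑ c : γ, ∑ a : α, g a b c :=
        Finset.sum_congr rfl fun b _ => Finset.sum_comm
    _ = ∑ c : γ, ∑ b : β, ∑ a : α, g a b c := Finset.sum_comm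

lemma wedge_int {p : ℕ} (v w : Fin n → ℝ) (u : Forms.Form n (p + 1))
    (I : Fin (p + 1) → Fin n) :
    Forms.wedgeV v (Forms.interiorV w u) I
      = ∑ k' : Fin (p + 1), ∑ j' : Fin n,
          (-1 : ℝ) ^ (k' : ℕ) * (v (I k') * (w j' * u (Fin.cons j' (I ∘ k'.succAbove)))) := by
  simp only [Forms.wedgeV, Forms.interiorV, Finset.mul_sum]
  exact Finset.sum_congr rfl fun k' _ => Finset.sum_congr rfl fun j' _ => by ring

lemma Fop_eq {p : ℕ} (A : Matrix (Fin n) (Fin n) ℝ) (u : Forms.Form n (p + 1))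
    (I : Fin (p + 1) → Fin n) :
    Forms.Fop A u I
      = ∑ k' : Fin (p + 1), ∑ j' : Fin n,
          (-1 : ℝ) ^ (k' : ℕ) * (A (I k') j' * u (Fin.cons j' (I ∘ k'.succAbove))) := by
  simp only [Forms.Fop, Forms.wedge1, Forms.interior1, Finset.mul_sum]
  rw [sum_comm3 (g := fun (i j : Fin n) (k' : Fin (p + 1)) => A i j *
      (((-1 : ℝ) ^ (k' : ℕ) * if I k' = i then 1 else 0) * u (Fin.cons j (I ∘ k'.succAbove))))]
  refine Finset.sum_congr rfl fun k' _ => Finset.sum_congr rfl fun j' _ => ?_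
  rw [Finset.sum_eq_single (I k')]
  · rw [if_pos rfl]
    ring
  · intro b _ hb
    simp [if_neg (Ne.symm hb)]
  · intro hmem
    exact absurd (Finset.mem_univ _) hmem

/-! ### Scalar calculus helpers -/

lemma dcoef_congr {f g : Euc n → ℝ} {x : Euc n} (hev : f =ᶠ[nhds x] g) (l : Fin n) :
    Forms.dcoef f x l = Forms.dcoef g x l := by
  unfold Forms.dcoef
  rw [hev.fderiv_eq]

lemma dcoef_mul {f g : Euc n → ℝ} {x : Euc n} (hf : DifferentiableAt ℝ f x)
    (hg : DifferentiableAt ℝ g x) (l : Fin n) :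
    Forms.dcoef (fun y => f y * g y) x l
      = f x * Forms.dcoef g x l + g x * Forms.dcoef f x l := by
  unfold Forms.dcoef
  rw [fderiv_fun_mul hf hg]
  simp

lemma dcoef_neg (f : Euc n → ℝ) (x : Euc n) (l : Fin n) :
    Forms.dcoef (fun y => -f y) x l = -Forms.dcoef f x l := by
  unfold Forms.dcoef
  rw [fderiv_fun_neg]
  simp

lemma dcoef_exp {f : Euc n → ℝ} {x : Euc n} (hf : DifferentiableAt ℝ f x) (l : Fin n) :
    Forms.dcoef (fun y => Real.exp (f y)) x l = Real.exp (f x) * Forms.dcoef f x l := by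
  unfold Forms.dcoef
  rw [fderiv_exp hf]
  simp

lemma dcoef_sum {ι : Type*} (sfin : Finset ι) (f : ι → Euc n → ℝ) {x : Euc n}
    (hf : ∀ a ∈ sfin, DifferentiableAt ℝ (f a) x) (l : Fin n) :
    Forms.dcoef (fun y => ∑ a ∈ sfin, f a y) x l = ∑ a ∈ sfin, Forms.dcoef (f a) x l := by
  unfold Forms.dcoef
  rw [fderiv_fun_sum hf]
  simp

lemma contDiffAt_dcoef {f : Euc n → ℝ} {x : Euc n} (hf : ContDiffAt ℝ 2 f x) (m : Fin n) :
    ContDiffAt ℝ 1 (fun y => Forms.dcoef f y m) x := by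
  have h1 : ContDiffAt ℝ 1 (fderiv ℝ f) x := hf.fderiv_right (by norm_num : (1 : WithTop ℕ∞) + 1 ≤ 2)
  exact h1.clm_apply contDiffAt_const

lemma hess_eq {ψ : Euc n → ℝ} {x : Euc n} (hψ : ContDiffAt ℝ 2 ψ x) (l m : Fin n) :
    Forms.hess ψ x l m
      = fderiv ℝ (fun y => Forms.dcoef ψ y m) x (EuclideanSpace.single l 1) := by
  have hd : DifferentiableAt ℝ (fderiv ℝ ψ) x :=
    (hψ.fderiv_right (by norm_num : (1 : WithTop ℕ∞) + 1 ≤ 2)).differentiableAt one_ne_zero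
  unfold Forms.hess Forms.dcoef
  rw [Matrix.of_apply, iteratedFDeriv_two_apply,
    fderiv_clm_apply hd (differentiableAt_const (EuclideanSpace.single m 1))]
  simp

lemma hess_mul {f g : Euc n → ℝ} {x : Euc n} (hf : ContDiffAt ℝ 2 f x)
    (hg : ContDiffAt ℝ 2 g x) (l m : Fin n) :
    Forms.hess (fun y => f y * g y) x l m
      = f x * Forms.hess g x l m + Forms.dcoef f x l * Forms.dcoef g x m
        + Forms.dcoef f x m * Forms.dcoef g x l + g x * Forms.hess f x l m := by
  have hdf : DifferentiableAt ℝ f x := hf.differentiableAt (by norm_num)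
  have hdg : DifferentiableAt ℝ g x := hg.differentiableAt (by norm_num)
  have hdcf : DifferentiableAt ℝ (fun y => Forms.dcoef f y m) x :=
    (contDiffAt_dcoef hf m).differentiableAt one_ne_zero
  have hdcg : DifferentiableAt ℝ (fun y => Forms.dcoef g y m) x :=
    (contDiffAt_dcoef hg m).differentiableAt one_ne_zero
  rw [hess_eq (hf.mul hg) l m]
  have hev : (fun y => Forms.dcoef (fun z => f z * g z) y m)
      =ᶠ[nhds x] fun y => f y * Forms.dcoef g y m + g y * Forms.dcoef f y m := by
    filter_upwards [hf.eventually (by simp), hg.eventually (by simp)] with y hfy hgy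
    exact dcoef_mul (hfy.differentiableAt (by norm_num)) (hgy.differentiableAt (by norm_num)) m
  rw [hev.fderiv_eq, fderiv_fun_add
    (show DifferentiableAt ℝ (fun y => f y * Forms.dcoef g y m) x from hdf.mul hdcg)
    (show DifferentiableAt ℝ (fun y => g y * Forms.dcoef f y m) x from hdg.mul hdcf), fderiv_fun_mul hdf hdcg,
    fderiv_fun_mul hdg hdcf]
  simp only [ContinuousLinearMap.add_apply, ContinuousLinearMap.smul_apply, smul_eq_mul]
  rw [← hess_eq hg l m, ← hess_eq hf l m]
  unfold Forms.dcoef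
  ring

lemma hess_exp {f : Euc n → ℝ} {x : Euc n} (hf : ContDiffAt ℝ 2 f x) (l m : Fin n) :
    Forms.hess (fun y => Real.exp (f y)) x l m
      = Real.exp (f x) * (Forms.dcoef f x l * Forms.dcoef f x m + Forms.hess f x l m) := by
  have hdf : DifferentiableAt ℝ f x := hf.differentiableAt (by norm_num)
  have hE : ContDiffAt ℝ 2 (fun y => Real.exp (f y)) x :=
    Real.contDiff_exp.contDiffAt.comp x hf
  have hdE : DifferentiableAt ℝ (fun y => Real.exp (f y)) x := hE.differentiableAt (by norm_num)
  have hdcf : DifferentiableAt ℝ (fun y => Forms.dcoef f y m) x :=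
    (contDiffAt_dcoef hf m).differentiableAt one_ne_zero
  rw [hess_eq hE l m]
  have hev : (fun y => Forms.dcoef (fun z => Real.exp (f z)) y m)
      =ᶠ[nhds x] fun y => Real.exp (f y) * Forms.dcoef f y m := by
    filter_upwards [hf.eventually (by simp)] with y hfy
    exact dcoef_exp (hfy.differentiableAt (by norm_num)) m
  rw [hev.fderiv_eq, fderiv_fun_mul hdE hdcf]
  simp only [ContinuousLinearMap.add_apply, ContinuousLinearMap.smul_apply, smul_eq_mul]
  rw [← hess_eq hf l m]
  unfold Forms.dcoef
  rw [fderiv_exp hdf]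
  simp only [ContinuousLinearMap.smul_apply, smul_eq_mul]
  ring

/-! ### Smoothness of determinant / inverse entries -/

lemma contDiffAt_prod {ι : Type*} {N : ℕ∞} (sfin : Finset ι) {f : ι → Euc n → ℝ} {x : Euc n}
    (hf : ∀ a ∈ sfin, ContDiffAt ℝ N (f a) x) :
    ContDiffAt ℝ N (fun y => ∏ a ∈ sfin, f a y) x := by
  classical
  revert hf
  refine Finset.induction_on sfin ?_ ?_
  · intro _
    simpa using contDiffAt_const (c := (1 : ℝ))
  · intro a t ha ih hf
    have : (fun y => ∏ b ∈ insert a t, f b y) = fun y => f a y * ∏ b ∈ t, f b y :=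
      funext fun y => Finset.prod_insert ha
    rw [this]
    exact (hf a (Finset.mem_insert_self a t)).mul
      (ih fun b hb => hf b (Finset.mem_insert_of_mem hb))

lemma contDiffAt_det {m : Type*} [Fintype m] [DecidableEq m] {N : ℕ∞}
    {M : Euc n → Matrix m m ℝ} {x : Euc n}
    (hM : ∀ a b, ContDiffAt ℝ N (fun y => M y a b) x) :
    ContDiffAt ℝ N (fun y => (M y).det) x := by
  have hrw : (fun y => (M y).det)
      = fun y => ∑ σ : Equiv.Perm m, ((Equiv.Perm.sign σ : ℤ) : ℝ) * ∏ a, M y (σ a) a := by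
    funext y
    rw [Matrix.det_apply]
    refine Finset.sum_congr rfl fun σ _ => ?_
    rw [Units.smul_def, zsmul_eq_mul]
  rw [hrw]
  exact ContDiffAt.sum fun σ _ =>
    contDiffAt_const.mul (contDiffAt_prod _ fun a _ => hM (σ a) a)

lemma contDiffAt_inv_entry {r : ℕ} {N : ℕ∞} {h : Euc n → Matrix (Fin r) (Fin r) ℝ} {x : Euc n}
    (hh : ∀ a b, ContDiffAt ℝ N (fun y => h y a b) x) (hdet : (h x).det ≠ 0) (i j : Fin r) :
    ContDiffAt ℝ N (fun y => (h y)⁻¹ i j) x := by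
  classical
  have hrw : (fun y => (h y)⁻¹ i j)
      = fun y => ((h y).det)⁻¹ * ((h y).updateRow j (Pi.single i 1)).det := by
    funext y
    rw [Matrix.inv_def, Matrix.smul_apply, Ring.inverse_eq_inv, Matrix.adjugate_apply,
      smul_eq_mul]
  rw [hrw]
  refine ((contDiffAt_det hh).inv hdet).mul (contDiffAt_det fun a b => ?_)
  by_cases hab : a = j
  · subst hab
    simp only [Matrix.updateRow_apply, if_pos rfl]
    exact contDiffAt_const
  · simp only [Matrix.updateRow_apply, if_neg hab]
    exact hh a b

end ThetaAux

/-- For a `C²` metric `h` on the trivial rank-`r` bundle over an open set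
`Ω ⊆ ℝⁿ` and a `C²` weight `φ`, the curvature operators satisfy
`Θ^{(E, h e^{−φ})} = Θ^{(E,h)} + F_φ` (with `F_φ` acting diagonally on the components). -/
theorem theta_conformal_change {n r p : ℕ}
    (Ω : Set (Euc n)) (hΩ : IsOpen Ω)
    (h : Euc n → Matrix (Fin r) (Fin r) ℝ)
    (hsmooth : ∀ j k : Fin r, ContDiffOn ℝ 2 (fun y => h y j k) Ω)
    (hsym : ∀ x ∈ Ω, (h x).IsSymm) (hpos : ∀ x ∈ Ω, (h x).PosDef)
    (φ : Euc n → ℝ) (hφ : ContDiffOn ℝ 2 φ Ω)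
    (s : Fin r → Euc n → Forms.Form n (p + 1))
    (hs : ∀ k : Fin r, ∀ y : Euc n, Forms.IsAlternating (s k y))
    (x : Euc n) (hx : x ∈ Ω) (i : Fin r) (I : Fin (p + 1) → Fin n) :
    Forms.Theta (fun y => Real.exp (-φ y) • h y) s x i I
      = Forms.Theta h s x i I + Forms.Fop (Forms.hess φ x) (s i x) I := by
  classical
  have hmem : Ω ∈ nhds x := hΩ.mem_nhds hx
  have hφx : ContDiffAt ℝ 2 φ x := hφ.contDiffAt hmem
  have hhx : ∀ j k : Fin r, ContDiffAt ℝ 2 (fun y => h y j k) x :=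
    fun j k => (hsmooth j k).contDiffAt hmem
  have hdetx : (h x).det ≠ 0 := ne_of_gt (hpos x hx).det_pos
  have hUnit : ∀ᶠ y in nhds x, IsUnit (h y).det := by
    filter_upwards [((ThetaAux.contDiffAt_det fun a b => hhx a b).continuousAt).eventually_ne
      hdetx] with y hy
    exact isUnit_iff_ne_zero.mpr hy
  have hφd : DifferentiableAt ℝ φ x := hφx.differentiableAt two_ne_zero
  have hnegφ : ContDiffAt ℝ 2 (fun y => -φ y) x := hφx.neg
  have hE : ContDiffAt ℝ 2 (fun y => Real.exp (-φ y)) x :=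
    Real.contDiff_exp.contDiffAt.comp x hnegφ
  have hEd : DifferentiableAt ℝ (fun y => Real.exp (-φ y)) x := hE.differentiableAt two_ne_zero
  have hexpφd : DifferentiableAt ℝ (fun y => Real.exp (φ y)) x :=
    (Real.contDiff_exp.contDiffAt.comp x hφx).differentiableAt two_ne_zero
  have hinvd : ∀ a b : Fin r, DifferentiableAt ℝ (fun y => (h y)⁻¹ a b) x :=
    fun a b => (ThetaAux.contDiffAt_inv_entry hhx hdetx a b).differentiableAt two_ne_zero
  have hhd : ∀ j k : Fin r, DifferentiableAt ℝ (fun y => h y j k) x :=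
    fun j k => (hhx j k).differentiableAt two_ne_zero
  have hcne : Real.exp (-φ x) ≠ 0 := Real.exp_ne_zero _
  have hc' : Real.exp (φ x) = (Real.exp (-φ x))⁻¹ := by rw [Real.exp_neg, inv_inv]
  have hdE : ∀ l : Fin n, Forms.dcoef (fun y => Real.exp (-φ y)) x l
      = -(Real.exp (-φ x) * Forms.dcoef φ x l) := by
    intro l
    rw [ThetaAux.dcoef_exp (show DifferentiableAt ℝ (fun y => -φ y) x from hφd.neg) l, ThetaAux.dcoef_neg φ x l]
    ring
  have hneg : ∀ l m : Fin n, Forms.hess (fun y => -φ y) x l m = -Forms.hess φ x l m := by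
    intro l m
    have hfun : (fun y => Forms.dcoef (fun z => -φ z) y m) = fun y => -Forms.dcoef φ y m :=
      funext fun y => ThetaAux.dcoef_neg φ y m
    rw [ThetaAux.hess_eq hnegφ l m, hfun, fderiv_fun_neg, ThetaAux.hess_eq hφx l m]
    simp
  have hHE : ∀ l m : Fin n, Forms.hess (fun y => Real.exp (-φ y)) x l m
      = Real.exp (-φ x) * (Forms.dcoef φ x l * Forms.dcoef φ x m)
        - Real.exp (-φ x) * Forms.hess φ x l m := by
    intro l m
    rw [ThetaAux.hess_exp hnegφ l m, hneg l m, ThetaAux.dcoef_neg φ x l,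
      ThetaAux.dcoef_neg φ x m]
    ring
  have hent : ∀ j k : Fin r,
      (fun y => (Real.exp (-φ y) • h y) j k) = fun y => Real.exp (-φ y) * h y j k := by
    intro j k; funext y; simp [Matrix.smul_apply]
  have F1 : ∀ (j k : Fin r) (l : Fin n),
      Forms.dcoef (fun y => (Real.exp (-φ y) • h y) j k) x l
        = Real.exp (-φ x) * Forms.dcoef (fun y => h y j k) x l
          - Real.exp (-φ x) * Forms.dcoef φ x l * h x j k := by
    intro j k l
    rw [hent j k, ThetaAux.dcoef_mul hEd (hhd j k) l, hdE l]
    ring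
  have F2 : ∀ (j k : Fin r) (l m : Fin n),
      Forms.hess (fun y => (Real.exp (-φ y) • h y) j k) x l m
        = Real.exp (-φ x) * (Forms.hess (fun y => h y j k) x l m
            - Forms.dcoef φ x l * Forms.dcoef (fun y => h y j k) x m
            - Forms.dcoef φ x m * Forms.dcoef (fun y => h y j k) x l
            + h x j k * (Forms.dcoef φ x l * Forms.dcoef φ x m - Forms.hess φ x l m)) := by
    intro j k l m
    rw [hent j k, ThetaAux.hess_mul hE (hhx j k) l m, hdE l, hdE m, hHE l m]
    ring
  have F3 : ∀ j : Fin r, (Real.exp (-φ x) • h x)⁻¹ i j = Real.exp (φ x) * (h x)⁻¹ i j := by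
    intro j
    haveI : Invertible (Real.exp (-φ x)) := invertibleOfNonzero hcne
    have h1 := Matrix.inv_smul (A := h x) (Real.exp (-φ x)) (isUnit_iff_ne_zero.mpr hdetx)
    rw [h1, Matrix.smul_apply, invOf_eq_inv, smul_eq_mul, ← Real.exp_neg, neg_neg]
  have hevinv : ∀ j : Fin r, (fun y => (Real.exp (-φ y) • h y)⁻¹ i j)
      =ᶠ[nhds x] fun y => Real.exp (φ y) * (h y)⁻¹ i j := by
    intro j
    filter_upwards [hUnit] with y hy
    haveI : Invertible (Real.exp (-φ y)) := invertibleOfNonzero (Real.exp_ne_zero _)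
    have h1 := Matrix.inv_smul (A := h y) (Real.exp (-φ y)) hy
    rw [h1, Matrix.smul_apply, invOf_eq_inv, smul_eq_mul, ← Real.exp_neg, neg_neg]
  have F4 : ∀ (j : Fin r) (l : Fin n),
      Forms.dcoef (fun y => (Real.exp (-φ y) • h y)⁻¹ i j) x l
        = Real.exp (φ x) * Forms.dcoef (fun y => (h y)⁻¹ i j) x l
          + (h x)⁻¹ i j * (Real.exp (φ x) * Forms.dcoef φ x l) := by
    intro j l
    rw [ThetaAux.dcoef_congr (hevinv j) l, ThetaAux.dcoef_mul hexpφd (hinvd i j) l,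
      ThetaAux.dcoef_exp hφd l]
  have F5 : ∀ (k : Fin r) (l : Fin n),
      ∑ j : Fin r, ((h x)⁻¹ i j * Forms.dcoef (fun y => h y j k) x l
        + h x j k * Forms.dcoef (fun y => (h y)⁻¹ i j) x l) = 0 := by
    intro k l
    have hev : (fun y => ∑ j : Fin r, (h y)⁻¹ i j * h y j k)
        =ᶠ[nhds x] fun _ => (1 : Matrix (Fin r) (Fin r) ℝ) i k := by
      filter_upwards [hUnit] with y hy
      rw [← Matrix.mul_apply, Matrix.nonsing_inv_mul _ hy]
    have h0 : Forms.dcoef (fun y => ∑ j : Fin r, (h y)⁻¹ i j * h y j k) x l = 0 := by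
      rw [ThetaAux.dcoef_congr hev l]
      simp [Forms.dcoef]
    have h2 : Forms.dcoef (fun y => ∑ j : Fin r, (h y)⁻¹ i j * h y j k) x l
        = ∑ j : Fin r, ((h x)⁻¹ i j * Forms.dcoef (fun y => h y j k) x l
            + h x j k * Forms.dcoef (fun y => (h y)⁻¹ i j) x l) := by
      rw [ThetaAux.dcoef_sum Finset.univ (fun j y => (h y)⁻¹ i j * h y j k)
        (fun j _ => (hinvd i j).mul (hhd j k)) l]
      exact Finset.sum_congr rfl fun j _ => ThetaAux.dcoef_mul (hinvd i j) (hhd j k) l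
    rw [← h2]
    exact h0
  have F6 : ∀ k : Fin r, ∑ j : Fin r, (h x)⁻¹ i j * h x j k = if i = k then 1 else 0 := by
    intro k
    rw [← Matrix.mul_apply, Matrix.nonsing_inv_mul _ (isUnit_iff_ne_zero.mpr hdetx),
      Matrix.one_apply]
  simp only [Forms.Theta, ThetaAux.wedge_int, ThetaAux.Fop_eq]
  have key : ∀ j k : Fin r,
      (∑ k' : Fin (p + 1), ∑ j' : Fin n,
          (-1 : ℝ) ^ (k' : ℕ) * (Forms.dcoef (fun y => (h y)⁻¹ i j) x (I k') *
            (Forms.dcoef (fun y => h y j k) x j' * s k x (Fin.cons j' (I ∘ k'.succAbove)))))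
        + (h x)⁻¹ i j * ∑ k' : Fin (p + 1), ∑ j' : Fin n,
            (-1 : ℝ) ^ (k' : ℕ) * (Forms.hess (fun y => h y j k) x (I k') j' *
              s k x (Fin.cons j' (I ∘ k'.succAbove)))
      = ((∑ k' : Fin (p + 1), ∑ j' : Fin n,
          (-1 : ℝ) ^ (k' : ℕ) * (Forms.dcoef (fun y => (Real.exp (-φ y) • h y)⁻¹ i j) x (I k') *
            (Forms.dcoef (fun y => (Real.exp (-φ y) • h y) j k) x j' *
              s k x (Fin.cons j' (I ∘ k'.succAbove)))))
        + (Real.exp (-φ x) • h x)⁻¹ i j * ∑ k' : Fin (p + 1), ∑ j' : Fin n,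
            (-1 : ℝ) ^ (k' : ℕ) * (Forms.hess (fun y => (Real.exp (-φ y) • h y) j k) x (I k') j' *
              s k x (Fin.cons j' (I ∘ k'.succAbove))))
        + (∑ k' : Fin (p + 1), ∑ j' : Fin n,
            (-1 : ℝ) ^ (k' : ℕ) * (((h x)⁻¹ i j * Forms.dcoef (fun y => h y j k) x (I k')
              + h x j k * Forms.dcoef (fun y => (h y)⁻¹ i j) x (I k')) *
              (Forms.dcoef φ x j' * s k x (Fin.cons j' (I ∘ k'.succAbove)))))
        + ((h x)⁻¹ i j * h x j k) * ∑ k' : Fin (p + 1), ∑ j' : Fin n,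
            (-1 : ℝ) ^ (k' : ℕ) * (Forms.hess φ x (I k') j' *
              s k x (Fin.cons j' (I ∘ k'.succAbove))) := by
    intro j k
    simp only [Finset.mul_sum, ← Finset.sum_add_distrib]
    refine Finset.sum_congr rfl fun k' _ => Finset.sum_congr rfl fun j' _ => ?_
    rw [F1 j k j', F2 j k (I k') j', F3 j, F4 j (I k'), hc']
    field_simp
    ring
  have hEq : (∑ j : Fin r, ∑ k : Fin r,
      ((∑ k' : Fin (p + 1), ∑ j' : Fin n,
          (-1 : ℝ) ^ (k' : ℕ) * (Forms.dcoef (fun y => (h y)⁻¹ i j) x (I k') *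
            (Forms.dcoef (fun y => h y j k) x j' * s k x (Fin.cons j' (I ∘ k'.succAbove)))))
        + (h x)⁻¹ i j * ∑ k' : Fin (p + 1), ∑ j' : Fin n,
            (-1 : ℝ) ^ (k' : ℕ) * (Forms.hess (fun y => h y j k) x (I k') j' *
              s k x (Fin.cons j' (I ∘ k'.succAbove)))))
      = ∑ j : Fin r, ∑ k : Fin r,
      (((∑ k' : Fin (p + 1), ∑ j' : Fin n,
          (-1 : ℝ) ^ (k' : ℕ) * (Forms.dcoef (fun y => (Real.exp (-φ y) • h y)⁻¹ i j) x (I k') *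
            (Forms.dcoef (fun y => (Real.exp (-φ y) • h y) j k) x j' *
              s k x (Fin.cons j' (I ∘ k'.succAbove)))))
        + (Real.exp (-φ x) • h x)⁻¹ i j * ∑ k' : Fin (p + 1), ∑ j' : Fin n,
            (-1 : ℝ) ^ (k' : ℕ) * (Forms.hess (fun y => (Real.exp (-φ y) • h y) j k) x (I k') j' *
              s k x (Fin.cons j' (I ∘ k'.succAbove))))
        + (∑ k' : Fin (p + 1), ∑ j' : Fin n,
            (-1 : ℝ) ^ (k' : ℕ) * (((h x)⁻¹ i j * Forms.dcoef (fun y => h y j k) x (I k')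
              + h x j k * Forms.dcoef (fun y => (h y)⁻¹ i j) x (I k')) *
              (Forms.dcoef φ x j' * s k x (Fin.cons j' (I ∘ k'.succAbove)))))
        + ((h x)⁻¹ i j * h x j k) * ∑ k' : Fin (p + 1), ∑ j' : Fin n,
            (-1 : ℝ) ^ (k' : ℕ) * (Forms.hess φ x (I k') j' *
              s k x (Fin.cons j' (I ∘ k'.succAbove)))) :=
    Finset.sum_congr rfl fun j _ => Finset.sum_congr rfl fun k _ => key j k
  simp only [Finset.sum_add_distrib] at hEq
  have hD1 : (∑ j : Fin r, ∑ k : Fin r, ∑ k' : Fin (p + 1), ∑ j' : Fin n,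
      (-1 : ℝ) ^ (k' : ℕ) * (((h x)⁻¹ i j * Forms.dcoef (fun y => h y j k) x (I k')
        + h x j k * Forms.dcoef (fun y => (h y)⁻¹ i j) x (I k')) *
        (Forms.dcoef φ x j' * s k x (Fin.cons j' (I ∘ k'.succAbove))))) = 0 := by
    rw [Finset.sum_comm]
    refine Finset.sum_eq_zero fun k _ => ?_
    rw [Finset.sum_comm]
    refine Finset.sum_eq_zero fun k' _ => ?_
    rw [Finset.sum_comm]
    refine Finset.sum_eq_zero fun j' _ => ?_
    have hre : ∀ j : Fin r,
        (-1 : ℝ) ^ (k' : ℕ) * (((h x)⁻¹ i j * Forms.dcoef (fun y => h y j k) x (I k')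
          + h x j k * Forms.dcoef (fun y => (h y)⁻¹ i j) x (I k')) *
          (Forms.dcoef φ x j' * s k x (Fin.cons j' (I ∘ k'.succAbove))))
        = ((h x)⁻¹ i j * Forms.dcoef (fun y => h y j k) x (I k')
            + h x j k * Forms.dcoef (fun y => (h y)⁻¹ i j) x (I k'))
          * ((-1 : ℝ) ^ (k' : ℕ) *
              (Forms.dcoef φ x j' * s k x (Fin.cons j' (I ∘ k'.succAbove)))) :=
      fun j => by ring
    simp only [hre]
    rw [← Finset.sum_mul, F5 k (I k'), zero_mul]
  have hD2 : (∑ j : Fin r, ∑ k : Fin r, ((h x)⁻¹ i j * h x j k) *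
      ∑ k' : Fin (p + 1), ∑ j' : Fin n, (-1 : ℝ) ^ (k' : ℕ) *
        (Forms.hess φ x (I k') j' * s k x (Fin.cons j' (I ∘ k'.succAbove))))
      = ∑ k' : Fin (p + 1), ∑ j' : Fin n, (-1 : ℝ) ^ (k' : ℕ) *
          (Forms.hess φ x (I k') j' * s i x (Fin.cons j' (I ∘ k'.succAbove))) := by
    rw [Finset.sum_comm]
    have hfac : ∀ k : Fin r, (∑ j : Fin r, ((h x)⁻¹ i j * h x j k) *
        ∑ k' : Fin (p + 1), ∑ j' : Fin n, (-1 : ℝ) ^ (k' : ℕ) *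
          (Forms.hess φ x (I k') j' * s k x (Fin.cons j' (I ∘ k'.succAbove))))
        = (if i = k then 1 else 0) *
            ∑ k' : Fin (p + 1), ∑ j' : Fin n, (-1 : ℝ) ^ (k' : ℕ) *
              (Forms.hess φ x (I k') j' * s k x (Fin.cons j' (I ∘ k'.succAbove))) :=
      fun k => by rw [← Finset.sum_mul, F6 k]
    simp only [hfac]
    simp [Finset.sum_ite_eq]
  rw [hD1, hD2] at hEq
  linarith [hEq]
end
end

section
/- (Prékopa's theorem, scalar case.) Let φ : ℝᵐ × ℝⁿ → ℝ be a convex function, and define ψ : ℝᵐ → ℝ ∪ {−∞} by e^{−ψ(x)} = ∫_{ℝⁿ} e^{−φ(x,y)} dy, assuming the integral is finite for all x. Then ψ is convex on ℝᵐ. -/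
open MeasureTheory

open Set

open scoped Pointwise ENNReal

lemma vol_add_compact {K L : Set ℝ} (hK : IsCompact K) (hL : IsCompact L)
    (hKne : K.Nonempty) (hLne : L.Nonempty) :
    volume K + volume L ≤ volume (K + L) := by
  set a := sSup K with ha
  set b := sInf L with hb
  have haK : a ∈ K := hK.sSup_mem hKne
  have hbL : b ∈ L := hL.sInf_mem hLne
  have hU : (a +ᵥ L : Set ℝ) ⊆ K + L := by
    rintro x ⟨l, hl, rfl⟩
    exact ⟨a, haK, l, hl, rfl⟩
  have hV : (b +ᵥ K : Set ℝ) ⊆ K + L := by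
    rintro x ⟨k, hk, rfl⟩
    exact ⟨k, hk, b, hbL, by simp [add_comm]⟩
  have hI : (a +ᵥ L : Set ℝ) ∩ (b +ᵥ K) ⊆ {a + b} := by
    rintro x ⟨⟨l, hl, rfl⟩, ⟨k, hk, hkx⟩⟩
    have h1 : a + b ≤ a + l := by
      gcongr; exact csInf_le hL.bddBelow hl  -- b ≤ l? csInf_le
    have h2 : b + k ≤ a + b := by
      have : k ≤ a := le_csSup hK.bddAbove hk
      linarith
    simp only [vadd_eq_add] at hkx ⊢
    have : a + l = b + k := hkx.symm
    have : a + l = a + b := le_antisymm (by linarith) h1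
    simp only [Set.mem_singleton_iff]
    linarith
  have hmeas : MeasurableSet (b +ᵥ K : Set ℝ) := (hK.vadd b).measurableSet  -- ?
  calc volume K + volume L = volume (b +ᵥ K : Set ℝ) + volume (a +ᵥ L : Set ℝ) := by
        rw [measure_vadd, measure_vadd]
    _ = volume ((a +ᵥ L : Set ℝ) ∪ (b +ᵥ K)) + volume ((a +ᵥ L : Set ℝ) ∩ (b +ᵥ K)) := by
        rw [measure_union_add_inter _ hmeas]; ring
    _ ≤ volume (K + L) + 0 := by
        gcongr
        · exact union_subset hU hV
        · calc volume ((a +ᵥ L : Set ℝ) ∩ (b +ᵥ K)) ≤ volume {a + b} := measure_mono hI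
            _ = 0 := measure_singleton _
    _ = volume (K + L) := add_zero _

lemma mink {t : ℝ} (ht : 0 < t) (ht1 : t < 1) {A B C : Set ℝ}
    (hA : MeasurableSet A) (hB : MeasurableSet B) (hAne : A.Nonempty) (hBne : B.Nonempty)
    (hAfin : volume A ≠ ⊤) (hBfin : volume B ≠ ⊤)
    (hsub : ∀ y ∈ A, ∀ z ∈ B, (1 - t) * y + t * z ∈ C) :
    ENNReal.ofReal (1 - t) * volume A + ENNReal.ofReal t * volume B ≤ volume C := by
  obtain ⟨a0, ha0⟩ := hAne
  obtain ⟨b0, hb0⟩ := hBne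
  rcases eq_top_or_lt_top (volume C) with hC | hC
  · simp [hC]
  apply ENNReal.le_of_forall_pos_le_add
  intro ε hε _
  obtain ⟨K, hKA, hKc, hKv⟩ := hA.exists_isCompact_lt_add (μ := volume) hAfin
    (ε := (ε : ℝ≥0∞) / 2) (by simp [hε.ne'])
  obtain ⟨L, hLB, hLc, hLv⟩ := hB.exists_isCompact_lt_add (μ := volume) hBfin
    (ε := (ε : ℝ≥0∞) / 2) (by simp [hε.ne'])
  set K' : Set ℝ := insert a0 K with hK'
  set L' : Set ℝ := insert b0 L with hL'
  have hK'c : IsCompact K' := hKc.insert a0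
  have hL'c : IsCompact L' := hLc.insert b0
  have hK'A : K' ⊆ A := insert_subset ha0 hKA
  have hL'B : L' ⊆ B := insert_subset hb0 hLB
  -- key: (1-t) • K' + t • L' ⊆ C
  have hsmulK : IsCompact ((1 - t) • K' : Set ℝ) := hK'c.smul _
  have hsmulL : IsCompact ((t : ℝ) • L' : Set ℝ) := hL'c.smul _
  have hsum : ((1 - t) • K' + t • L' : Set ℝ) ⊆ C := by
    rintro x ⟨u, ⟨y, hy, rfl⟩, v, ⟨z, hz, rfl⟩, rfl⟩
    exact hsub y (hK'A hy) z (hL'B hz)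
  have hvol : ENNReal.ofReal (1 - t) * volume K' + ENNReal.ofReal t * volume L'
      ≤ volume C := by
    have h1 : volume ((1 - t) • K' : Set ℝ) = ENNReal.ofReal (1 - t) * volume K' := by
      rw [Measure.addHaar_smul_of_nonneg volume (by linarith) K']
      simp
    have h2 : volume ((t : ℝ) • L' : Set ℝ) = ENNReal.ofReal t * volume L' := by
      rw [Measure.addHaar_smul_of_nonneg volume ht.le L']
      simp
    calc ENNReal.ofReal (1 - t) * volume K' + ENNReal.ofReal t * volume L'
        = volume ((1 - t) • K' : Set ℝ) + volume ((t : ℝ) • L' : Set ℝ) := by rw [h1, h2]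
      _ ≤ volume ((1 - t) • K' + t • L' : Set ℝ) :=
          vol_add_compact hsmulK hsmulL
            ((insert_nonempty _ _).smul_set) ((insert_nonempty _ _).smul_set)
      _ ≤ volume C := measure_mono hsum
  have hKv' : volume A ≤ volume K' + (ε : ℝ≥0∞) / 2 := by
    calc volume A ≤ volume K + (ε : ℝ≥0∞) / 2 := hKv.le
      _ ≤ volume K' + (ε : ℝ≥0∞) / 2 := by gcongr; exact subset_insert _ _
  have hLv' : volume B ≤ volume L' + (ε : ℝ≥0∞) / 2 := by
    calc volume B ≤ volume L + (ε : ℝ≥0∞) / 2 := hLv.le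
      _ ≤ volume L' + (ε : ℝ≥0∞) / 2 := by gcongr; exact subset_insert _ _
  have ht' : ENNReal.ofReal (1 - t) ≤ 1 := by
    rw [← ENNReal.ofReal_one]; exact ENNReal.ofReal_le_ofReal (by linarith)
  have ht'' : ENNReal.ofReal t ≤ 1 := by
    rw [← ENNReal.ofReal_one]; exact ENNReal.ofReal_le_ofReal (by linarith)
  calc ENNReal.ofReal (1 - t) * volume A + ENNReal.ofReal t * volume B
      ≤ ENNReal.ofReal (1 - t) * (volume K' + (ε : ℝ≥0∞) / 2) + ENNReal.ofReal t * (volume L' + (ε : ℝ≥0∞) / 2) := by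
        gcongr
    _ = (ENNReal.ofReal (1 - t) * volume K' + ENNReal.ofReal t * volume L')
        + (ENNReal.ofReal (1 - t) * ((ε : ℝ≥0∞) / 2) + ENNReal.ofReal t * ((ε : ℝ≥0∞) / 2)) := by ring
    _ ≤ volume C + (1 * ((ε : ℝ≥0∞) / 2) + 1 * ((ε : ℝ≥0∞) / 2)) := by gcongr
    _ = volume C + ε := by rw [one_mul, ENNReal.add_halves]

lemma layer_lower {f : ℝ → ℝ≥0∞} (hf : Measurable f) {a : ℝ≥0∞} (ha0 : a ≠ 0) (hat : a ≠ ⊤)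
    (hfa : ∀ᵐ y : ℝ, f y ≤ a) :
    (∫⁻ y, f y) / a = ∫⁻ s in Ioo (0:ℝ) 1, volume {y | ENNReal.ofReal s * a < f y} := by
  have hS : MeasurableSet {p : ℝ × ℝ | ENNReal.ofReal p.1 * a < f p.2} :=
    measurableSet_lt ((ENNReal.measurable_ofReal.comp measurable_fst).mul_const a)
      (hf.comp measurable_snd)
  set k : ℝ × ℝ → ℝ≥0∞ :=
    Set.indicator {p : ℝ × ℝ | ENNReal.ofReal p.1 * a < f p.2} (1 : ℝ × ℝ → ℝ≥0∞) with hk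
  have hswap : (∫⁻ s in Ioo (0:ℝ) 1, ∫⁻ y, k (s, y)) = ∫⁻ y, ∫⁻ s in Ioo (0:ℝ) 1, k (s, y) :=
    lintegral_lintegral_swap (measurable_const.indicator hS).aemeasurable
  have hleft : ∀ s : ℝ, (∫⁻ y, k (s, y)) = volume {y | ENNReal.ofReal s * a < f y} := by
    intro s
    have hT : MeasurableSet {y : ℝ | ENNReal.ofReal s * a < f y} :=
      measurableSet_lt measurable_const hf
    rw [← lintegral_indicator_one hT]
    exact lintegral_congr fun y => by simp [hk, Set.indicator_apply, Set.mem_setOf_eq]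
  have hright : ∀ᵐ y : ℝ, (∫⁻ s in Ioo (0:ℝ) 1, k (s, y)) = f y / a := by
    filter_upwards [hfa] with y hy
    have hfy : f y ≠ ⊤ := ne_top_of_le_ne_top hat hy
    have hq : f y / a ≠ ⊤ := by
      simp only [ne_eq, ENNReal.div_eq_top]
      push_neg
      exact ⟨fun _ => ha0, fun h => absurd h hfy⟩
    have hq1 : f y / a ≤ 1 := ENNReal.div_le_of_le_mul (by simpa using hy)
    have hT : MeasurableSet {s : ℝ | ENNReal.ofReal s * a < f y} :=
      measurableSet_lt ((ENNReal.measurable_ofReal).mul_const a) measurable_const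
    have hind : ∀ s : ℝ, k (s, y) =
        Set.indicator {s : ℝ | ENNReal.ofReal s * a < f y} (1 : ℝ → ℝ≥0∞) s := by
      intro s; simp [hk, Set.indicator_apply, Set.mem_setOf_eq]
    calc (∫⁻ s in Ioo (0:ℝ) 1, k (s, y))
        = ∫⁻ s in Ioo (0:ℝ) 1,
            Set.indicator {s : ℝ | ENNReal.ofReal s * a < f y} (1 : ℝ → ℝ≥0∞) s := by
          exact lintegral_congr fun s => hind s
      _ = volume ({s : ℝ | ENNReal.ofReal s * a < f y} ∩ Ioo (0:ℝ) 1) := by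
          rw [lintegral_indicator_one hT, Measure.restrict_apply hT]
      _ = volume (Ioo (0:ℝ) ((f y / a).toReal)) := by
          congr 1
          ext s
          simp only [Set.mem_inter_iff, Set.mem_setOf_eq, Set.mem_Ioo]
          constructor
          · rintro ⟨hlt, hs0, hs1⟩
            refine ⟨hs0, ?_⟩
            rw [← ENNReal.ofReal_lt_iff_lt_toReal hs0.le hq]
            exact (ENNReal.lt_div_iff_mul_lt (Or.inl ha0) (Or.inl hat)).mpr hlt
          · rintro ⟨hs0, hsr⟩
            have hr1 : (f y / a).toReal ≤ 1 := by
              calc (f y / a).toReal ≤ (1:ℝ≥0∞).toReal := ENNReal.toReal_mono ENNReal.one_ne_top hq1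
                _ = 1 := ENNReal.toReal_one
            refine ⟨?_, hs0, lt_of_lt_of_le hsr hr1⟩
            have := (ENNReal.ofReal_lt_iff_lt_toReal hs0.le hq).mpr hsr
            exact (ENNReal.lt_div_iff_mul_lt (Or.inl ha0) (Or.inl hat)).mp this
      _ = ENNReal.ofReal ((f y / a).toReal) := by rw [Real.volume_Ioo, sub_zero]
      _ = f y / a := ENNReal.ofReal_toReal hq
  calc (∫⁻ y, f y) / a = ∫⁻ y, f y / a := by
        simp only [div_eq_mul_inv]
        rw [lintegral_mul_const _ hf]
    _ = ∫⁻ y, ∫⁻ s in Ioo (0:ℝ) 1, k (s, y) := (lintegral_congr_ae (hright.mono fun y h => h.symm))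
    _ = ∫⁻ s in Ioo (0:ℝ) 1, ∫⁻ y, k (s, y) := hswap.symm
    _ = ∫⁻ s in Ioo (0:ℝ) 1, volume {y | ENNReal.ofReal s * a < f y} := by
        exact lintegral_congr fun s => hleft s

lemma layer_upper {h : ℝ → ℝ≥0∞} (hh : Measurable h) {c : ℝ≥0∞} (hc0 : c ≠ 0) (hct : c ≠ ⊤) :
    (∫⁻ s in Ioo (0:ℝ) 1, volume {y | ENNReal.ofReal s * c ≤ h y}) ≤ (∫⁻ y, h y) / c := by
  have hS : MeasurableSet {p : ℝ × ℝ | ENNReal.ofReal p.1 * c ≤ h p.2} :=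
    measurableSet_le ((ENNReal.measurable_ofReal.comp measurable_fst).mul_const c)
      (hh.comp measurable_snd)
  set k : ℝ × ℝ → ℝ≥0∞ :=
    Set.indicator {p : ℝ × ℝ | ENNReal.ofReal p.1 * c ≤ h p.2} (1 : ℝ × ℝ → ℝ≥0∞) with hk
  have hswap : (∫⁻ s in Ioo (0:ℝ) 1, ∫⁻ y, k (s, y)) = ∫⁻ y, ∫⁻ s in Ioo (0:ℝ) 1, k (s, y) :=
    lintegral_lintegral_swap (measurable_const.indicator hS).aemeasurable
  have hleft : ∀ s : ℝ, (∫⁻ y, k (s, y)) = volume {y | ENNReal.ofReal s * c ≤ h y} := by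
    intro s
    have hT : MeasurableSet {y : ℝ | ENNReal.ofReal s * c ≤ h y} :=
      measurableSet_le measurable_const hh
    rw [← lintegral_indicator_one hT]
    exact lintegral_congr fun y => by simp [hk, Set.indicator_apply, Set.mem_setOf_eq]
  have hright : ∀ y : ℝ, (∫⁻ s in Ioo (0:ℝ) 1, k (s, y)) ≤ h y / c := by
    intro y
    have hT : MeasurableSet {s : ℝ | ENNReal.ofReal s * c ≤ h y} :=
      measurableSet_le ((ENNReal.measurable_ofReal).mul_const c) measurable_const
    have hind : ∀ s : ℝ, k (s, y) =
        Set.indicator {s : ℝ | ENNReal.ofReal s * c ≤ h y} (1 : ℝ → ℝ≥0∞) s := by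
      intro s; simp [hk, Set.indicator_apply, Set.mem_setOf_eq]
    have h1 : (∫⁻ s in Ioo (0:ℝ) 1, k (s, y))
        = volume ({s : ℝ | ENNReal.ofReal s * c ≤ h y} ∩ Ioo (0:ℝ) 1) := by
      rw [lintegral_congr fun s => hind s, lintegral_indicator_one hT,
        Measure.restrict_apply hT]
    rw [h1]
    rcases le_or_gt 1 (h y / c) with hq | hq
    · calc volume ({s : ℝ | ENNReal.ofReal s * c ≤ h y} ∩ Ioo (0:ℝ) 1)
          ≤ volume (Ioo (0:ℝ) 1) := measure_mono Set.inter_subset_right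
        _ = 1 := by rw [Real.volume_Ioo]; simp
        _ ≤ h y / c := hq
    · have hqt : h y / c ≠ ⊤ := (lt_of_lt_of_le hq le_top).ne
      calc volume ({s : ℝ | ENNReal.ofReal s * c ≤ h y} ∩ Ioo (0:ℝ) 1)
          ≤ volume (Ioc (0:ℝ) ((h y / c).toReal)) := by
            apply measure_mono
            rintro s ⟨hs, hs0, _⟩
            simp only [Set.mem_setOf_eq] at hs
            have : ENNReal.ofReal s ≤ h y / c :=
              (ENNReal.le_div_iff_mul_le (Or.inl hc0) (Or.inl hct)).mpr hs
            exact ⟨hs0, (ENNReal.ofReal_le_iff_le_toReal hqt).mp this⟩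
        _ = ENNReal.ofReal ((h y / c).toReal) := by rw [Real.volume_Ioc, sub_zero]
        _ = h y / c := ENNReal.ofReal_toReal hqt
  calc (∫⁻ s in Ioo (0:ℝ) 1, volume {y | ENNReal.ofReal s * c ≤ h y})
      = ∫⁻ s in Ioo (0:ℝ) 1, ∫⁻ y, k (s, y) := (lintegral_congr fun s => (hleft s).symm)
    _ = ∫⁻ y, ∫⁻ s in Ioo (0:ℝ) 1, k (s, y) := hswap
    _ ≤ ∫⁻ y, h y / c := lintegral_mono hright
    _ = (∫⁻ y, h y) / c := by
        simp only [div_eq_mul_inv]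
        rw [lintegral_mul_const _ hh]

lemma PL1_core {t : ℝ} (ht : 0 < t) (ht1 : t < 1) (f g h : ℝ → ℝ≥0∞)
    (hf : Measurable f) (hg : Measurable g) (hh : Measurable h)
    (hfi : (∫⁻ y, f y) ≠ ⊤) (hgi : (∫⁻ y, g y) ≠ ⊤)
    (hfs : essSup f volume ≠ ⊤) (hgs : essSup g volume ≠ ⊤)
    (hyp : ∀ y z : ℝ, f y ^ (1 - t) * g z ^ t ≤ h ((1 - t) * y + t * z)) :
    (∫⁻ y, f y) ^ (1 - t) * (∫⁻ y, g y) ^ t ≤ ∫⁻ y, h y := by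
  have ht1' : (0:ℝ) < 1 - t := by linarith
  by_cases hf0 : (∫⁻ y, f y) = 0
  · rw [hf0, ENNReal.zero_rpow_of_pos ht1', zero_mul]; exact zero_le
  by_cases hg0 : (∫⁻ y, g y) = 0
  · rw [hg0, ENNReal.zero_rpow_of_pos ht, mul_zero]; exact zero_le
  set a := essSup f volume with haeq
  set b := essSup g volume with hbeq
  have hfa : ∀ᵐ y : ℝ, f y ≤ a := ENNReal.ae_le_essSup f
  have hgb : ∀ᵐ y : ℝ, g y ≤ b := ENNReal.ae_le_essSup g
  have ha0 : a ≠ 0 := by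
    intro h0
    apply hf0
    rw [lintegral_eq_zero_iff hf]
    filter_upwards [hfa] with y hy
    simpa [h0] using hy
  have hb0 : b ≠ 0 := by
    intro h0
    apply hg0
    rw [lintegral_eq_zero_iff hg]
    filter_upwards [hgb] with y hy
    simpa [h0] using hy
  set c := a ^ (1 - t) * b ^ t with hceq
  have hc0 : c ≠ 0 := by
    apply mul_ne_zero
    · exact (ENNReal.rpow_pos (pos_iff_ne_zero.mpr ha0) hfs).ne'
    · exact (ENNReal.rpow_pos (pos_iff_ne_zero.mpr hb0) hgs).ne'
  have hct : c ≠ ⊤ := ENNReal.mul_ne_top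
    (ENNReal.rpow_ne_top_of_nonneg ht1'.le hfs) (ENNReal.rpow_ne_top_of_nonneg ht.le hgs)
  -- Step 1 : level set inclusion via mink
  have step1 : ∀ s : ℝ, s ∈ Ioo (0:ℝ) 1 →
      ENNReal.ofReal (1 - t) * volume {y | ENNReal.ofReal s * a < f y}
        + ENNReal.ofReal t * volume {y | ENNReal.ofReal s * b < g y}
      ≤ volume {y | ENNReal.ofReal s * c ≤ h y} := by
    intro s hs
    have hsa0 : ENNReal.ofReal s * a ≠ 0 :=
      mul_ne_zero (ENNReal.ofReal_pos.mpr hs.1).ne' ha0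
    have hsb0 : ENNReal.ofReal s * b ≠ 0 :=
      mul_ne_zero (ENNReal.ofReal_pos.mpr hs.1).ne' hb0
    have hAne : {y : ℝ | ENNReal.ofReal s * a < f y}.Nonempty := by
      by_contra hne
      rw [Set.not_nonempty_iff_eq_empty] at hne
      have hle : a ≤ ENNReal.ofReal s * a := by
        refine essSup_le_of_ae_le _ ?_
        filter_upwards with y
        by_contra hlt
        push_neg at hlt
        exact absurd (hne ▸ hlt : _) (Set.notMem_empty y)
      have : ENNReal.ofReal s * a < 1 * a := by
        rw [ENNReal.mul_lt_mul_iff_left ha0 hfs]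
        exact ENNReal.ofReal_lt_one.mpr hs.2
      rw [one_mul] at this
      exact absurd hle (not_le.mpr this)
    have hBne : {y : ℝ | ENNReal.ofReal s * b < g y}.Nonempty := by
      by_contra hne
      rw [Set.not_nonempty_iff_eq_empty] at hne
      have hle : b ≤ ENNReal.ofReal s * b := by
        refine essSup_le_of_ae_le _ ?_
        filter_upwards with y
        by_contra hlt
        push_neg at hlt
        exact absurd (hne ▸ hlt : _) (Set.notMem_empty y)
      have : ENNReal.ofReal s * b < 1 * b := by
        rw [ENNReal.mul_lt_mul_iff_left hb0 hgs]
        exact ENNReal.ofReal_lt_one.mpr hs.2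
      rw [one_mul] at this
      exact absurd hle (not_le.mpr this)
    have hAfin : volume {y : ℝ | ENNReal.ofReal s * a < f y} ≠ ⊤ := by
      intro htop
      have hsub : {y : ℝ | ENNReal.ofReal s * a < f y} ⊆ {y : ℝ | ENNReal.ofReal s * a ≤ f y} :=
        fun y hy => by simp only [Set.mem_setOf_eq] at hy ⊢; exact hy.le
      have := mul_meas_ge_le_lintegral₀ (μ := volume) hf.aemeasurable (ENNReal.ofReal s * a)
      have h2 : volume {y : ℝ | ENNReal.ofReal s * a ≤ f y} = ⊤ :=
        top_le_iff.mp (htop ▸ measure_mono hsub)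
      rw [h2, ENNReal.mul_top hsa0] at this
      exact hfi (top_le_iff.mp this)
    have hBfin : volume {y : ℝ | ENNReal.ofReal s * b < g y} ≠ ⊤ := by
      intro htop
      have hsub : {y : ℝ | ENNReal.ofReal s * b < g y} ⊆ {y : ℝ | ENNReal.ofReal s * b ≤ g y} :=
        fun y hy => by simp only [Set.mem_setOf_eq] at hy ⊢; exact hy.le
      have := mul_meas_ge_le_lintegral₀ (μ := volume) hg.aemeasurable (ENNReal.ofReal s * b)
      have h2 : volume {y : ℝ | ENNReal.ofReal s * b ≤ g y} = ⊤ :=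
        top_le_iff.mp (htop ▸ measure_mono hsub)
      rw [h2, ENNReal.mul_top hsb0] at this
      exact hgi (top_le_iff.mp this)
    apply mink ht ht1 (measurableSet_lt measurable_const hf)
      (measurableSet_lt measurable_const hg) hAne hBne hAfin hBfin
    intro y hy z hz
    simp only [Set.mem_setOf_eq] at hy hz ⊢
    calc ENNReal.ofReal s * c = (ENNReal.ofReal s * a) ^ (1 - t) * (ENNReal.ofReal s * b) ^ t := by
          rw [ENNReal.mul_rpow_of_nonneg _ _ ht1'.le, ENNReal.mul_rpow_of_nonneg _ _ ht.le,
            show ENNReal.ofReal s ^ (1-t) * a ^ (1-t) * (ENNReal.ofReal s ^ t * b ^ t)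
              = (ENNReal.ofReal s ^ (1-t) * ENNReal.ofReal s ^ t) * (a ^ (1-t) * b ^ t) by ring,
            ← ENNReal.rpow_add _ _ (ENNReal.ofReal_pos.mpr hs.1).ne' ENNReal.ofReal_ne_top,
            sub_add_cancel, ENNReal.rpow_one, hceq]
      _ ≤ f y ^ (1 - t) * g z ^ t :=
          mul_le_mul' (ENNReal.rpow_le_rpow hy.le ht1'.le) (ENNReal.rpow_le_rpow hz.le ht.le)
      _ ≤ h ((1 - t) * y + t * z) := hyp y z
  -- Step 2 : integrate over s and use the layer cake lemmas
  have hFmeas : Measurable fun s : ℝ => volume {y | ENNReal.ofReal s * a < f y} := by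
    apply Antitone.measurable
    intro s s' hss'
    apply measure_mono
    intro y hy
    exact lt_of_le_of_lt (mul_le_mul_left (ENNReal.ofReal_le_ofReal hss') a) hy
  have hGmeas : Measurable fun s : ℝ => volume {y | ENNReal.ofReal s * b < g y} := by
    apply Antitone.measurable
    intro s s' hss'
    apply measure_mono
    intro y hy
    exact lt_of_le_of_lt (mul_le_mul_left (ENNReal.ofReal_le_ofReal hss') b) hy
  have int1 : ENNReal.ofReal (1 - t) * ((∫⁻ y, f y) / a) + ENNReal.ofReal t * ((∫⁻ y, g y) / b)
      ≤ (∫⁻ y, h y) / c := by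
    calc ENNReal.ofReal (1 - t) * ((∫⁻ y, f y) / a) + ENNReal.ofReal t * ((∫⁻ y, g y) / b)
        = ENNReal.ofReal (1 - t) * (∫⁻ s in Ioo (0:ℝ) 1, volume {y | ENNReal.ofReal s * a < f y})
          + ENNReal.ofReal t * (∫⁻ s in Ioo (0:ℝ) 1, volume {y | ENNReal.ofReal s * b < g y}) := by
          rw [layer_lower hf ha0 hfs hfa, layer_lower hg hb0 hgs hgb]
      _ = ∫⁻ s in Ioo (0:ℝ) 1,
            (ENNReal.ofReal (1 - t) * volume {y | ENNReal.ofReal s * a < f y}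
              + ENNReal.ofReal t * volume {y | ENNReal.ofReal s * b < g y}) := by
          rw [lintegral_add_left (hFmeas.const_mul _), lintegral_const_mul _ hFmeas,
            lintegral_const_mul _ hGmeas]
      _ ≤ ∫⁻ s in Ioo (0:ℝ) 1, volume {y | ENNReal.ofReal s * c ≤ h y} := by
          apply lintegral_mono_ae
          filter_upwards [ae_restrict_mem measurableSet_Ioo] with s hs
          exact step1 s hs
      _ ≤ (∫⁻ y, h y) / c := layer_upper hh hc0 hct
  -- Step 3 : Young / AM-GM and conclusion
  have young : ((∫⁻ y, f y) / a) ^ (1 - t) * ((∫⁻ y, g y) / b) ^ t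
      ≤ ENNReal.ofReal (1 - t) * ((∫⁻ y, f y) / a) + ENNReal.ofReal t * ((∫⁻ y, g y) / b) := by
    have hpq : (1 / (1 - t)).HolderConjugate (1 / t) := by
      rw [Real.holderConjugate_iff]
      constructor
      · rw [lt_div_iff₀ ht1']; linarith
      · rw [one_div, one_div, inv_inv, inv_inv]; ring
    have := ENNReal.young_inequality (((∫⁻ y, f y) / a) ^ (1 - t)) (((∫⁻ y, g y) / b) ^ t) hpq
    rw [← ENNReal.rpow_mul, ← ENNReal.rpow_mul] at this
    rw [show (1 - t) * (1 / (1 - t)) = 1 by field_simp, show t * (1 / t) = 1 by field_simp,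
      ENNReal.rpow_one, ENNReal.rpow_one] at this
    have e1 : ENNReal.ofReal (1 / (1 - t)) ≠ 0 := (ENNReal.ofReal_pos.mpr (by positivity)).ne'
    have e2 : ENNReal.ofReal (1 / t) ≠ 0 := (ENNReal.ofReal_pos.mpr (by positivity)).ne'
    calc ((∫⁻ y, f y) / a) ^ (1 - t) * ((∫⁻ y, g y) / b) ^ t
        ≤ (∫⁻ y, f y) / a / ENNReal.ofReal (1 / (1 - t))
          + (∫⁻ y, g y) / b / ENNReal.ofReal (1 / t) := this
      _ = ENNReal.ofReal (1 - t) * ((∫⁻ y, f y) / a) + ENNReal.ofReal t * ((∫⁻ y, g y) / b) := by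
          rw [div_eq_mul_inv ((∫⁻ y, f y) / a), div_eq_mul_inv ((∫⁻ y, g y) / b),
            ← ENNReal.ofReal_inv_of_pos (by positivity : (0:ℝ) < 1 / (1 - t)),
            ← ENNReal.ofReal_inv_of_pos (by positivity : (0:ℝ) < 1 / t),
            one_div, one_div, inv_inv, inv_inv]
          ring
  calc (∫⁻ y, f y) ^ (1 - t) * (∫⁻ y, g y) ^ t
      = c * (((∫⁻ y, f y) / a) ^ (1 - t) * ((∫⁻ y, g y) / b) ^ t) := by
        rw [hceq, show a ^ (1-t) * b ^ t * (((∫⁻ y, f y) / a) ^ (1 - t) * ((∫⁻ y, g y) / b) ^ t)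
            = (a ^ (1-t) * ((∫⁻ y, f y) / a) ^ (1-t)) * (b ^ t * ((∫⁻ y, g y) / b) ^ t) by ring,
          ← ENNReal.mul_rpow_of_nonneg _ _ ht1'.le, ← ENNReal.mul_rpow_of_nonneg _ _ ht.le,
          ENNReal.mul_div_cancel ha0 hfs, ENNReal.mul_div_cancel hb0 hgs]
    _ ≤ c * ((∫⁻ y, h y) / c) := by
        apply mul_le_mul_right (le_trans young int1)
    _ = ∫⁻ y, h y := ENNReal.mul_div_cancel hc0 hct

noncomputable def truncF (u : ℝ → ℝ≥0∞) (n : ℕ) : ℝ → ℝ≥0∞ :=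
  fun y => (Set.Icc (-(n:ℝ)) (n:ℝ)).indicator (fun y => min (u y) (n:ℝ≥0∞)) y

lemma truncF_le (u : ℝ → ℝ≥0∞) (n : ℕ) (y : ℝ) : truncF u n y ≤ u y := by
  unfold truncF
  by_cases hy : y ∈ Set.Icc (-(n:ℝ)) (n:ℝ)
  · rw [Set.indicator_of_mem hy]; exact min_le_left _ _
  · rw [Set.indicator_of_notMem hy]; exact zero_le

lemma truncF_le_n (u : ℝ → ℝ≥0∞) (n : ℕ) (y : ℝ) : truncF u n y ≤ (n:ℝ≥0∞) := by
  unfold truncF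
  by_cases hy : y ∈ Set.Icc (-(n:ℝ)) (n:ℝ)
  · rw [Set.indicator_of_mem hy]; exact min_le_right _ _
  · rw [Set.indicator_of_notMem hy]; exact zero_le

lemma truncF_meas {u : ℝ → ℝ≥0∞} (hu : Measurable u) (n : ℕ) : Measurable (truncF u n) :=
  ((hu.min measurable_const).indicator measurableSet_Icc)

lemma truncF_mono (u : ℝ → ℝ≥0∞) : Monotone (truncF u) := by
  intro m n hmn y
  unfold truncF
  by_cases hy : y ∈ Set.Icc (-(m:ℝ)) (m:ℝ)
  · have hy' : y ∈ Set.Icc (-(n:ℝ)) (n:ℝ) := by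
      have : (m:ℝ) ≤ (n:ℝ) := Nat.cast_le.mpr hmn
      exact Set.Icc_subset_Icc (by linarith) this hy
    rw [Set.indicator_of_mem hy, Set.indicator_of_mem hy']
    exact min_le_min le_rfl (Nat.cast_le.mpr hmn)
  · rw [Set.indicator_of_notMem hy]; exact zero_le

lemma truncF_iSup (u : ℝ → ℝ≥0∞) (y : ℝ) : (⨆ n, truncF u n y) = u y := by
  apply le_antisymm (iSup_le fun n => truncF_le u n y)
  obtain ⟨n₀, hn₀⟩ := exists_nat_ge |y|
  have hmem : ∀ n : ℕ, n₀ ≤ n → y ∈ Set.Icc (-(n:ℝ)) (n:ℝ) := by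
    intro n hn
    have h1 : |y| ≤ (n:ℝ) := le_trans hn₀ (Nat.cast_le.mpr hn)
    exact Set.mem_Icc.mpr ⟨neg_le_of_abs_le h1, le_of_abs_le h1⟩
  by_cases htop : u y = ⊤
  · have key : (⨆ n : ℕ, (n:ℝ≥0∞)) ≤ ⨆ n, truncF u n y := by
      apply iSup_le
      intro n
      apply le_iSup_of_le (max n₀ n)
      unfold truncF
      rw [Set.indicator_of_mem (hmem _ (le_max_left _ _)), htop, min_eq_right le_top]
      exact Nat.cast_le.mpr (le_max_right _ _)
    rw [htop]
    calc (⊤:ℝ≥0∞) = ⨆ n : ℕ, (n:ℝ≥0∞) := ENNReal.iSup_natCast.symm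
      _ ≤ _ := key
  · obtain ⟨n₁, hn₁⟩ := exists_nat_ge (u y).toReal
    have hun : u y ≤ ((max n₀ n₁ : ℕ):ℝ≥0∞) := by
      calc u y = ENNReal.ofReal (u y).toReal := (ENNReal.ofReal_toReal htop).symm
        _ ≤ ENNReal.ofReal ((max n₀ n₁ : ℕ):ℝ) := ENNReal.ofReal_le_ofReal
            (le_trans hn₁ (Nat.cast_le.mpr (le_max_right _ _)))
        _ = ((max n₀ n₁ : ℕ):ℝ≥0∞) := ENNReal.ofReal_natCast _
    apply le_iSup_of_le (max n₀ n₁)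
    unfold truncF
    rw [Set.indicator_of_mem (hmem _ (le_max_left _ _)), min_eq_left hun]

lemma truncF_lintegral_ne_top {u : ℝ → ℝ≥0∞} (hu : Measurable u) (n : ℕ) :
    (∫⁻ y, truncF u n y) ≠ ⊤ := by
  have : (∫⁻ y, truncF u n y) ≤ (n:ℝ≥0∞) * volume (Set.Icc (-(n:ℝ)) (n:ℝ)) := by
    unfold truncF
    rw [lintegral_indicator measurableSet_Icc]
    calc (∫⁻ y in Set.Icc (-(n:ℝ)) (n:ℝ), min (u y) (n:ℝ≥0∞))
        ≤ ∫⁻ _ in Set.Icc (-(n:ℝ)) (n:ℝ), (n:ℝ≥0∞) :=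
          lintegral_mono fun y => min_le_right _ _
      _ = (n:ℝ≥0∞) * volume (Set.Icc (-(n:ℝ)) (n:ℝ)) := by
          rw [setLIntegral_const]
    
  intro htop
  rw [htop] at this
  have hvol : volume (Set.Icc (-(n:ℝ)) (n:ℝ)) ≠ ⊤ := by
    rw [Real.volume_Icc]; exact ENNReal.ofReal_ne_top
  exact (ENNReal.mul_ne_top (ENNReal.natCast_ne_top n) hvol) (top_le_iff.mp this)

lemma truncF_essSup_ne_top {u : ℝ → ℝ≥0∞} (n : ℕ) : essSup (truncF u n) volume ≠ ⊤ := by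
  have : essSup (truncF u n) volume ≤ (n:ℝ≥0∞) := by
    refine essSup_le_of_ae_le _ ?_
    filter_upwards with y
    exact truncF_le_n u n y
  exact ne_top_of_le_ne_top (ENNReal.natCast_ne_top n) this

lemma PL1 {t : ℝ} (ht : 0 < t) (ht1 : t < 1) (f g h : ℝ → ℝ≥0∞)
    (hf : Measurable f) (hg : Measurable g) (hh : Measurable h)
    (hyp : ∀ y z : ℝ, f y ^ (1 - t) * g z ^ t ≤ h ((1 - t) * y + t * z)) :
    (∫⁻ y, f y) ^ (1 - t) * (∫⁻ y, g y) ^ t ≤ ∫⁻ y, h y := by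
  have ht1' : (0:ℝ) < 1 - t := by linarith
  have key : ∀ n : ℕ, (∫⁻ y, truncF f n y) ^ (1 - t) * (∫⁻ y, truncF g n y) ^ t ≤ ∫⁻ y, h y := by
    intro n
    apply PL1_core ht ht1 _ _ _ (truncF_meas hf n) (truncF_meas hg n) hh
      (truncF_lintegral_ne_top hf n) (truncF_lintegral_ne_top hg n)
      (truncF_essSup_ne_top n) (truncF_essSup_ne_top n)
    intro y z
    calc truncF f n y ^ (1 - t) * truncF g n z ^ t
        ≤ f y ^ (1 - t) * g z ^ t :=
          mul_le_mul' (ENNReal.rpow_le_rpow (truncF_le f n y) ht1'.le)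
            (ENNReal.rpow_le_rpow (truncF_le g n z) ht.le)
      _ ≤ h ((1 - t) * y + t * z) := hyp y z
  have hsupf : (∫⁻ y, f y) = ⨆ n, ∫⁻ y, truncF f n y := by
    rw [← lintegral_iSup (fun n => truncF_meas hf n) (fun m n hmn y => truncF_mono f hmn y)]
    exact lintegral_congr fun y => (truncF_iSup f y).symm
  have hsupg : (∫⁻ y, g y) = ⨆ n, ∫⁻ y, truncF g n y := by
    rw [← lintegral_iSup (fun n => truncF_meas hg n) (fun m n hmn y => truncF_mono g hmn y)]
    exact lintegral_congr fun y => (truncF_iSup g y).symm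
  have hrpow_iSup : ∀ (e : ℝ), 0 < e → ∀ s : ℕ → ℝ≥0∞, (⨆ n, s n) ^ e = ⨆ n, (s n) ^ e := by
    intro e he s
    exact OrderIso.map_iSup (ENNReal.orderIsoRpow e he) s
  rw [hsupf, hsupg, hrpow_iSup _ ht1', hrpow_iSup _ ht, ENNReal.iSup_mul]
  apply iSup_le
  intro n
  rw [ENNReal.mul_iSup]
  apply iSup_le
  intro m
  calc (∫⁻ y, truncF f n y) ^ (1 - t) * (∫⁻ y, truncF g m y) ^ t
      ≤ (∫⁻ y, truncF f (max n m) y) ^ (1 - t) * (∫⁻ y, truncF g (max n m) y) ^ t := by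
        apply mul_le_mul'
        · exact ENNReal.rpow_le_rpow (lintegral_mono fun y => truncF_mono f (le_max_left _ _) y)
            ht1'.le
        · exact ENNReal.rpow_le_rpow (lintegral_mono fun y => truncF_mono g (le_max_right _ _) y)
            ht.le
    _ ≤ ∫⁻ y, h y := key (max n m)

lemma PLn {t : ℝ} (ht : 0 < t) (ht1 : t < 1) : ∀ (n : ℕ) (f g h : (Fin n → ℝ) → ℝ≥0∞),
    Measurable f → Measurable g → Measurable h →
    (∀ y z, f y ^ (1 - t) * g z ^ t ≤ h ((1 - t) • y + t • z)) →
    (∫⁻ y, f y) ^ (1 - t) * (∫⁻ y, g y) ^ t ≤ ∫⁻ y, h y := by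
  intro n
  induction n with
  | zero =>
    intro f g h hf hg hh hyp
    have huniv : (volume : Measure (Fin 0 → ℝ)) Set.univ = 1 := by
      rw [MeasureTheory.volume_pi, Measure.pi_univ]
      simp
    rw [lintegral_unique f, lintegral_unique g, lintegral_unique h, huniv, mul_one, mul_one,
      mul_one]
    have hdef : ∀ (y z w : Fin 0 → ℝ), f y ^ (1 - t) * g z ^ t ≤ h w := by
      intro y z w
      have := hyp y z
      rwa [Subsingleton.elim ((1 - t) • y + t • z) w] at this
    exact hdef _ _ _
  | succ n ih =>
    intro f g h hf hg hh hyp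
    set e := MeasurableEquiv.piFinSuccAbove (fun _ : Fin (n+1) => ℝ) 0 with he
    have hmp := volume_preserving_piFinSuccAbove (fun _ : Fin (n+1) => ℝ) 0
    have hflin : ∀ (α β : ℝ) (u v : Fin (n+1) → ℝ), e (α • u + β • v) = α • e u + β • e v := by
      intro α β u v
      rfl
    have hlin : ∀ (α β : ℝ) (p q : ℝ × (Fin n → ℝ)),
        e.symm (α • p + β • q) = α • e.symm p + β • e.symm q := by
      intro α β p q
      apply e.toEquiv.injective
      show e (e.symm (α • p + β • q)) = e (α • e.symm p + β • e.symm q)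
      rw [hflin, e.apply_symm_apply, e.apply_symm_apply, e.apply_symm_apply]
    have hval : ∀ (u : (Fin (n+1) → ℝ) → ℝ≥0∞), Measurable u →
        (∫⁻ w, u w) = ∫⁻ x : ℝ, ∫⁻ y : Fin n → ℝ, u (e.symm (x, y)) := by
      intro u hu
      rw [← (MeasurePreserving.symm e hmp).lintegral_comp hu, Measure.volume_eq_prod ℝ (Fin n → ℝ)]
      exact lintegral_prod (fun z => u (e.symm z)) ((hu.comp e.symm.measurable).aemeasurable)
    set F : ℝ → ℝ≥0∞ := fun x => ∫⁻ y : Fin n → ℝ, f (e.symm (x, y)) with hF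
    set G : ℝ → ℝ≥0∞ := fun x => ∫⁻ y : Fin n → ℝ, g (e.symm (x, y)) with hG
    set H : ℝ → ℝ≥0∞ := fun x => ∫⁻ y : Fin n → ℝ, h (e.symm (x, y)) with hH
    have hFm : Measurable F :=
      Measurable.lintegral_prod_right (hf.comp e.symm.measurable)
    have hGm : Measurable G :=
      Measurable.lintegral_prod_right (hg.comp e.symm.measurable)
    have hHm : Measurable H :=
      Measurable.lintegral_prod_right (hh.comp e.symm.measurable)
    have hypFGH : ∀ x z : ℝ, F x ^ (1 - t) * G z ^ t ≤ H ((1 - t) * x + t * z) := by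
      intro x z
      apply ih (fun y => f (e.symm (x, y))) (fun y => g (e.symm (z, y)))
        (fun y => h (e.symm ((1 - t) * x + t * z, y)))
        (hf.comp (e.symm.measurable.comp measurable_prodMk_left))
        (hg.comp (e.symm.measurable.comp measurable_prodMk_left))
        (hh.comp (e.symm.measurable.comp measurable_prodMk_left))
      intro y w
      have := hyp (e.symm (x, y)) (e.symm (z, w))
      rw [← hlin] at this
      have hpair : (1 - t) • ((x, y) : ℝ × (Fin n → ℝ)) + t • (z, w)
          = ((1 - t) * x + t * z, (1 - t) • y + t • w) := rfl
      rwa [hpair] at this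
    calc (∫⁻ y, f y) ^ (1 - t) * (∫⁻ y, g y) ^ t
        = (∫⁻ x, F x) ^ (1 - t) * (∫⁻ x, G x) ^ t := by rw [hval f hf, hval g hg]
      _ ≤ ∫⁻ x, H x := PL1 ht ht1 F G H hFm hGm hHm hypFGH
      _ = ∫⁻ y, h y := (hval h hh).symm

lemma PL_euclidean {n : ℕ} {t : ℝ} (ht : 0 < t) (ht1 : t < 1)
    (f g h : EuclideanSpace ℝ (Fin n) → ℝ≥0∞)
    (hf : Measurable f) (hg : Measurable g) (hh : Measurable h)
    (hyp : ∀ y z, f y ^ (1 - t) * g z ^ t ≤ h ((1 - t) • y + t • z)) :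
    (∫⁻ y, f y) ^ (1 - t) * (∫⁻ y, g y) ^ t ≤ ∫⁻ y, h y := by
  set e := (MeasurableEquiv.toLp 2 (Fin n → ℝ)).symm with he
  have hmp := EuclideanSpace.volume_preserving_symm_measurableEquiv_toLp (Fin n)
  have hval : ∀ (u : EuclideanSpace ℝ (Fin n) → ℝ≥0∞), Measurable u →
      (∫⁻ x, u x) = ∫⁻ w : Fin n → ℝ, u (e.symm w) :=
    fun u hu => ((MeasurePreserving.symm e hmp).lintegral_comp hu).symm
  have hlin : ∀ (α β : ℝ) (p q : Fin n → ℝ),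
      e.symm (α • p + β • q) = α • e.symm p + β • e.symm q := fun _ _ _ _ => rfl
  rw [hval f hf, hval g hg, hval h hh]
  apply PLn ht ht1 n (fun w => f (e.symm w)) (fun w => g (e.symm w)) (fun w => h (e.symm w))
    (hf.comp e.symm.measurable) (hg.comp e.symm.measurable) (hh.comp e.symm.measurable)
  intro y z
  show f (e.symm y) ^ (1 - t) * g (e.symm z) ^ t ≤ h (e.symm ((1 - t) • y + t • z))
  rw [hlin]
  exact hyp (e.symm y) (e.symm z)

/-- (Prékopa's theorem, scalar case.)  Let `φ : ℝᵐ × ℝⁿ → ℝ` be convex and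
suppose `e^{−ψ(x)} = ∫_{ℝⁿ} e^{−φ(x,y)} dy` is finite for all `x` (i.e. the integrand is
integrable).  Then `ψ` is convex on `ℝᵐ`. -/
theorem prekopa_scalar {m n : ℕ}
    (φ : EuclideanSpace ℝ (Fin m) × EuclideanSpace ℝ (Fin n) → ℝ)
    (hφ : ConvexOn ℝ Set.univ φ)
    (hint : ∀ x : EuclideanSpace ℝ (Fin m),
        Integrable (fun y : EuclideanSpace ℝ (Fin n) => Real.exp (-φ (x, y))) volume)
    (ψ : EuclideanSpace ℝ (Fin m) → ℝ)
    (hψ : ∀ x : EuclideanSpace ℝ (Fin m),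
        Real.exp (-ψ x) = ∫ y : EuclideanSpace ℝ (Fin n), Real.exp (-φ (x, y)) ∂volume) :
    ConvexOn ℝ Set.univ ψ := by
  have hφc : Continuous φ := by
    rw [← continuousOn_univ]
    exact hφ.continuousOn isOpen_univ
  refine ⟨convex_univ, ?_⟩
  intro x0 _ x1 _ aa bb ha hb hab
  rcases eq_or_lt_of_le ha with ha0 | ha0
  · have hbb : bb = 1 := by linarith
    simp [← ha0, hbb]
  rcases eq_or_lt_of_le hb with hb0 | hb0
  · have haa : aa = 1 := by linarith
    simp [← hb0, haa]
  have haa : aa = 1 - bb := by linarith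
  have hbb1 : bb < 1 := by linarith
  set xt := aa • x0 + bb • x1 with hxt
  set f : EuclideanSpace ℝ (Fin n) → ℝ≥0∞ :=
    fun y => ENNReal.ofReal (Real.exp (-φ (x0, y))) with hfdef
  set g : EuclideanSpace ℝ (Fin n) → ℝ≥0∞ :=
    fun y => ENNReal.ofReal (Real.exp (-φ (x1, y))) with hgdef
  set h : EuclideanSpace ℝ (Fin n) → ℝ≥0∞ :=
    fun y => ENNReal.ofReal (Real.exp (-φ (xt, y))) with hhdef
  have hmeas : ∀ x : EuclideanSpace ℝ (Fin m),
      Measurable fun y : EuclideanSpace ℝ (Fin n) => ENNReal.ofReal (Real.exp (-φ (x, y))) := by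
    intro x
    exact ENNReal.measurable_ofReal.comp
      ((Real.continuous_exp.comp ((hφc.comp (Continuous.prodMk_right x)).neg)).measurable)
  have hrpow : ∀ (u s : ℝ), 0 < s →
      ENNReal.ofReal (Real.exp u) ^ s = ENNReal.ofReal (Real.exp (s * u)) := by
    intro u s hs
    rw [ENNReal.ofReal_rpow_of_pos (Real.exp_pos u), Real.rpow_def_of_pos (Real.exp_pos u),
      Real.log_exp, mul_comm]
  have hyp : ∀ y z, f y ^ (1 - bb) * g z ^ bb ≤ h ((1 - bb) • y + bb • z) := by
    intro y z
    have hconv := hφ.2 (Set.mem_univ (x0, y)) (Set.mem_univ (x1, z)) ha hb hab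
    have hpair : aa • ((x0, y) : EuclideanSpace ℝ (Fin m) × EuclideanSpace ℝ (Fin n))
        + bb • (x1, z) = (xt, aa • y + bb • z) := rfl
    rw [hpair] at hconv
    rw [hfdef, hgdef, hhdef]
    simp only
    rw [hrpow _ _ (by linarith : (0:ℝ) < 1 - bb), hrpow _ _ hb0, ← ENNReal.ofReal_mul
      (Real.exp_nonneg _), ← Real.exp_add]
    apply ENNReal.ofReal_le_ofReal
    rw [smul_eq_mul, smul_eq_mul] at hconv
    rw [Real.exp_le_exp, ← haa]
    linarith
  have hPL := PL_euclidean hb0 hbb1 f g h (hmeas x0) (hmeas x1) (hmeas xt) hyp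
  have hlint : ∀ x : EuclideanSpace ℝ (Fin m),
      (∫⁻ y, ENNReal.ofReal (Real.exp (-φ (x, y)))) = ENNReal.ofReal (Real.exp (-ψ x)) := by
    intro x
    rw [← ofReal_integral_eq_lintegral_ofReal (hint x)
      (Filter.Eventually.of_forall fun y => (Real.exp_pos _).le), ← hψ x]
  rw [hfdef, hgdef, hhdef] at hPL
  simp only at hPL
  rw [hlint x0, hlint x1, hlint xt] at hPL
  rw [hrpow _ _ (by linarith : (0:ℝ) < 1 - bb), hrpow _ _ hb0, ← ENNReal.ofReal_mul
    (Real.exp_nonneg _), ← Real.exp_add] at hPL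
  have := (ENNReal.ofReal_le_ofReal_iff (Real.exp_nonneg _)).mp hPL
  rw [Real.exp_le_exp] at this
  rw [haa, smul_eq_mul, smul_eq_mul]
  linarith
end
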